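/- arXiv:2109.09836 — 4 statements merged into one kernel-verified Lean document; each statement's English description precedes it below -/
import Mathlib

section
/- Let Q : A ⥤ B be a lax epimorphism between small categories and M : C ⥤ D a discrete splitting bifibration. Then for all functors G : A ⥤ C and H : B ⥤ D with Q ⋙ H = G ⋙ M, there exists a unique functor T : B ⥤ C such that Q ⋙ T = G and T ⋙ M = H. -/
open CategoryTheory

universe u

namespace CategoryTheory

variable {E B : Type u} [Category.{u} E] [Category.{u} B]

/-- Objects of the factorization category `g ↓↓ P`: factorizations `b ⟶ P e ⟶ c` of `g`. -/
structure FactObj (P : E ⥤ B) {b c : B} (g : b ⟶ c) where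
  pt : E
  h : b ⟶ P.obj pt
  k : P.obj pt ⟶ c
  fac : h ≫ k = g

/-- The factorization category `g ↓↓ P`. -/
instance FactObj.category (P : E ⥤ B) {b c : B} (g : b ⟶ c) : Category (FactObj P g) where
  Hom x y := { u : x.pt ⟶ y.pt // x.h ≫ P.map u = y.h ∧ P.map u ≫ y.k = x.k }
  id x := ⟨𝟙 x.pt, by simp, by simp⟩
  comp {x y z} u v := ⟨u.1 ≫ v.1,
    by rw [Functor.map_comp, ← Category.assoc, u.2.1, v.2.1],
    by rw [Functor.map_comp, Category.assoc, v.2.2, u.2.2]⟩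
  id_comp f := Subtype.ext (by simp)
  comp_id f := Subtype.ext (by simp)
  assoc f g h := Subtype.ext (by simp)

/-- A `P`-split of `b`: a factorization `b ⟶ P e ⟶ b` of the identity such that
`(e, 𝟙, h ∘ k)` and `(e, h ∘ k, 𝟙)` are connected in the factorization category
`(h ∘ k) ↓↓ P`. -/
def IsPSplit (P : E ⥤ B) {b : B} (e : E) (h : b ⟶ P.obj e) (k : P.obj e ⟶ b) : Prop :=
  h ≫ k = 𝟙 b ∧
    Zigzag (J := FactObj P (k ≫ h))
      ⟨e, 𝟙 (P.obj e), k ≫ h, Category.id_comp _⟩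
      ⟨e, k ≫ h, 𝟙 (P.obj e), Category.comp_id _⟩

/-- A lift of a `P`-split diagram, as in the definition of a discrete splitting
bifibration. -/
structure SplitLift (P : E ⥤ B) {b c : B} (g : b ⟶ c) {e e' : E}
    (h : b ⟶ P.obj e) (k : P.obj e ⟶ b) (h' : c ⟶ P.obj e') (k' : P.obj e' ⟶ c) where
  b₀ : E
  c₀ : E
  h₀ : b₀ ⟶ e
  k₀ : e ⟶ b₀
  g₀ : b₀ ⟶ c₀
  h₀' : c₀ ⟶ e'
  k₀' : e' ⟶ c₀
  hb : P.obj b₀ = b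
  hc : P.obj c₀ = c
  map_h₀ : P.map h₀ = eqToHom hb ≫ h
  map_k₀ : P.map k₀ = k ≫ eqToHom hb.symm
  map_g₀ : P.map g₀ = eqToHom hb ≫ g ≫ eqToHom hc.symm
  map_h₀' : P.map h₀' = eqToHom hc ≫ h'
  map_k₀' : P.map k₀' = k' ≫ eqToHom hc.symm
  comm : h₀ ≫ k₀ ≫ g₀ = g₀ ≫ h₀' ≫ k₀'

/-- A functor `P : E ⥤ B` is a *discrete splitting bifibration* if every `P`-split diagram
(a morphism `g : b ⟶ c`, a `P`-split of `b` and a `P`-split of `c`, suitably connected in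
`g ↓↓ P`) admits a unique lift. -/
def IsDSB (P : E ⥤ B) : Prop :=
  ∀ {b c : B} (g : b ⟶ c) {e e' : E} (h : b ⟶ P.obj e) (k : P.obj e ⟶ b)
    (h' : c ⟶ P.obj e') (k' : P.obj e' ⟶ c)
    (hsp : IsPSplit P e h k) (hsp' : IsPSplit P e' h' k'),
    Zigzag (J := FactObj P g)
      ⟨e, h, k ≫ g, by rw [← Category.assoc, hsp.1, Category.id_comp]⟩
      ⟨e', g ≫ h', k', by rw [Category.assoc, hsp'.1, Category.comp_id]⟩ →
    ∃ L : SplitLift P g h k h' k', ∀ L' : SplitLift P g h k h' k', L' = L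

end CategoryTheory

namespace CategoryTheory

/-- A functor `J : A ⥤ B` between small categories is a *lax epimorphism* (in the 2-category
`Cat` of small categories) if for every category `C`, the precomposition functor
`(B ⥤ C) ⥤ (A ⥤ C)` given by whiskering on the left with `J` is full and faithful. -/
def Functor.IsLaxEpi {A B : Type u} [Category.{u} A] [Category.{u} B] (J : A ⥤ B) : Prop :=
  ∀ (C : Type u) [Category.{u} C],
    (((whiskeringLeft A B C).obj J).Full ∧ ((whiskeringLeft A B C).obj J).Faithful)

end CategoryTheory

namespace LaxEpiAux

open CategoryTheory

variable {A B : Type u} [Category.{u} A] [Category.{u} B] (Q : A ⥤ B) (b : B)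

/-- Factorizations of some morphism out of `b` through `Q`. -/
structure Pre (x : B) : Type u where
  a : A
  u : b ⟶ Q.obj a
  v : Q.obj a ⟶ x

variable {Q b}

/-- The basic relation on prefactorizations. -/
def rel {x : B} (p q : Pre Q b x) : Prop :=
  ∃ w : p.a ⟶ q.a, p.u ≫ Q.map w = q.u ∧ Q.map w ≫ q.v = p.v

theorem rel_comp {x : B} {p q : Pre Q b x} (h : rel p q) : p.u ≫ p.v = q.u ≫ q.v := by
  obtain ⟨w, h1, h2⟩ := h
  rw [← h1, ← h2, Category.assoc]

theorem eqvGen_comp {x : B} {p q : Pre Q b x} (h : Relation.EqvGen (rel (Q := Q) (b := b)) p q) :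
    p.u ≫ p.v = q.u ≫ q.v := by
  induction h with
  | rel _ _ h => exact rel_comp h
  | refl => rfl
  | symm _ _ _ ih => exact ih.symm
  | trans _ _ _ _ _ ih1 ih2 => exact ih1.trans ih2

variable (Q b)

/-- A small replacement for `Set` just large enough to run the density argument. -/
def CC (_ : A ⥤ B) (_ : B) : Type u := B ⊕ B

/-- Realization of the objects of `CC` as types. -/
def real : CC Q b → Type u
  | Sum.inl x => b ⟶ x
  | Sum.inr x => Quot (rel (Q := Q) (b := b) (x := x))

instance : Category.{u} (CC Q b) where
  Hom o o' := real Q b o → real Q b o'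
  id _ := id
  comp f g := g ∘ f

@[simp] theorem comp_apply {o o' o'' : CC Q b} (f : o ⟶ o') (g : o' ⟶ o'') (z : real Q b o) :
    (f ≫ g) z = g (f z) := rfl

@[simp] theorem id_apply {o : CC Q b} (z : real Q b o) : (𝟙 o : o ⟶ o) z = z := rfl

/-- The "representable" functor `B(b, -)`. -/
def FS : B ⥤ CC Q b where
  obj x := Sum.inl x
  map {x y} f := fun (u : b ⟶ x) => (u ≫ f : b ⟶ y)
  map_id x := by funext u; exact Category.comp_id u
  map_comp f g := by funext u; exact (Category.assoc u f g).symm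

/-- The functor of connected components of prefactorizations. -/
def FT : B ⥤ CC Q b where
  obj x := Sum.inr x
  map {x y} f := fun (p : Quot (rel (Q := Q) (b := b) (x := x))) =>
    p.lift (fun p => Quot.mk _ ⟨p.a, p.u, p.v ≫ f⟩)
      (by
        rintro p q ⟨w, h1, h2⟩
        exact Quot.sound ⟨w, h1, by rw [← Category.assoc, h2]⟩)
  map_id x := by
    funext p
    induction p using Quot.ind with
    | _ p => exact congrArg (Quot.mk _) (by simp)
  map_comp f g := by
    funext p
    induction p using Quot.ind with
    | _ p => exact congrArg (Quot.mk _) (by simp)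

/-- The comparison natural transformation on `Q`-objects. -/
def ψ : Q ⋙ FS Q b ⟶ Q ⋙ FT Q b where
  app a := fun (u : b ⟶ Q.obj a) => Quot.mk _ ⟨a, u, 𝟙 (Q.obj a)⟩
  naturality {a a'} w := by
    funext u
    exact (Quot.sound ⟨w, rfl, by simp⟩).symm

/-- Composition natural transformation. -/
def σ : FT Q b ⟶ FS Q b where
  app x := fun p => p.lift (fun p => p.u ≫ p.v) (fun p q h => rel_comp h)
  naturality {x y} f := by
    funext p
    induction p using Quot.ind with
    | _ p => exact (Category.assoc _ _ _).symm

theorem key (hQ : Q.IsLaxEpi) {x : B} (f : b ⟶ x) :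
    ∃ τ : FS Q b ⟶ FT Q b,
      (∀ (a : A) (u : b ⟶ Q.obj a), τ.app (Q.obj a) u = Quot.mk _ ⟨a, u, 𝟙 (Q.obj a)⟩) ∧
      (σ Q b).app x (τ.app x f) = f := by
  obtain ⟨hfull, hfaith⟩ := hQ (CC Q b)
  obtain ⟨τ, hτ⟩ := hfull.map_surjective (ψ Q b)
  have happ : ∀ (a : A), τ.app (Q.obj a) = (ψ Q b).app a := fun a =>
    congrArg (fun (θ : Q ⋙ FS Q b ⟶ Q ⋙ FT Q b) => θ.app a) hτ
  have hστ : τ ≫ σ Q b = 𝟙 (FS Q b) := by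
    apply hfaith.map_injective
    rw [Functor.map_comp, hτ]
    ext a : 2
    funext u
    show (σ Q b).app (Q.obj a) ((ψ Q b).app a u) = u
    simp [ψ, σ]
    exact Category.comp_id u
  refine ⟨τ, fun a u => by rw [happ a]; rfl, ?_⟩
  have := congrArg (fun (θ : FS Q b ⟶ FS Q b) => θ.app x f) hστ
  exact this

theorem τ_eq (τ : FS Q b ⟶ FT Q b)
    (h : ∀ (a : A) (u : b ⟶ Q.obj a), τ.app (Q.obj a) u = Quot.mk _ ⟨a, u, 𝟙 (Q.obj a)⟩)
    {x : B} (p : Pre Q b x) : τ.app x (p.u ≫ p.v) = Quot.mk _ p := by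
  have := congrArg (fun (θ : real Q b (Sum.inl (Q.obj p.a)) → real Q b (Sum.inr x)) => θ p.u)
    (τ.naturality p.v)
  calc τ.app x (p.u ≫ p.v) = τ.app x ((FS Q b).map p.v p.u) := rfl
    _ = (FT Q b).map p.v (τ.app (Q.obj p.a) p.u) := this
    _ = (FT Q b).map p.v (Quot.mk _ ⟨p.a, p.u, 𝟙 (Q.obj p.a)⟩) := by rw [h]
    _ = (show real Q b ((FT Q b).obj x) from Quot.mk _ p) := congrArg (Quot.mk _) (by cases p; simp [FT])

variable {Q b}

theorem zigzag_of_eqvGen {x : B} {f : b ⟶ x} :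
    ∀ {p q : Pre Q b x}, Relation.EqvGen (rel (Q := Q) (b := b)) p q →
    ∀ (hp : p.u ≫ p.v = f) (hq : q.u ≫ q.v = f),
      Zigzag (J := FactObj Q f) ⟨p.a, p.u, p.v, hp⟩ ⟨q.a, q.u, q.v, hq⟩ := by
  intro p q h
  induction h with
  | rel p q h =>
    intro hp hq
    obtain ⟨w, h1, h2⟩ := h
    exact Relation.ReflTransGen.single (Or.inl ⟨⟨w, h1, h2⟩⟩)
  | refl p => intro hp hq; exact Relation.ReflTransGen.refl
  | symm p q h ih =>
    intro hp hq
    exact Zigzag.symm (ih hq hp)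
  | trans p q r h1 h2 ih1 ih2 =>
    intro hp hr
    have hq : q.u ≫ q.v = f := (eqvGen_comp h1).symm.trans hp
    exact (ih1 hp hq).trans (ih2 hq hr)

/-- Main consequence of being a lax epimorphism: every factorization category is
nonempty and connected. -/
theorem factObj_nonempty (hQ : Q.IsLaxEpi) {x : B} (f : b ⟶ x) : Nonempty (FactObj Q f) := by
  obtain ⟨τ, hτ, hσ⟩ := key Q b hQ f
  obtain ⟨p, hp⟩ := Quot.exists_rep (τ.app x f)
  refine ⟨⟨p.a, p.u, p.v, ?_⟩⟩
  have : (σ Q b).app x (Quot.mk _ p) = f := by rw [hp]; exact hσ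
  exact this

theorem factObj_zigzag (hQ : Q.IsLaxEpi) {x : B} (f : b ⟶ x) (p q : FactObj Q f) :
    Zigzag p q := by
  obtain ⟨τ, hτ, -⟩ := key Q b hQ f
  have hp : τ.app x f = Quot.mk _ (⟨p.pt, p.h, p.k⟩ : Pre Q b x) :=
    (congrArg (τ.app x) p.fac).symm.trans (τ_eq Q b τ hτ ⟨p.pt, p.h, p.k⟩)
  have hq : τ.app x f = Quot.mk _ (⟨q.pt, q.h, q.k⟩ : Pre Q b x) :=
    (congrArg (τ.app x) q.fac).symm.trans (τ_eq Q b τ hτ ⟨q.pt, q.h, q.k⟩)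
  have heq : Relation.EqvGen (rel (Q := Q) (b := b))
      (⟨p.pt, p.h, p.k⟩ : Pre Q b x) ⟨q.pt, q.h, q.k⟩ := Quot.eq.mp (hp.symm.trans hq)
  have := zigzag_of_eqvGen heq p.fac q.fac
  exact this

end LaxEpiAux

namespace CategoryTheory

/-- Extensionality for factorization objects with the same apex. -/
theorem FactObj.ext' {E B : Type u} [Category.{u} E] [Category.{u} B]
    {P : E ⥤ B} {b c : B} {g : b ⟶ c} {pt : E} {h h' : b ⟶ P.obj pt}
    {k k' : P.obj pt ⟶ c} (hh : @Eq (@Quiver.Hom B CategoryStruct.toQuiver b (P.obj pt)) h h')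
    (hk : @Eq (@Quiver.Hom B CategoryStruct.toQuiver (P.obj pt) c) k k') {f : h ≫ k = g} {f' : h' ≫ k' = g} :
    (⟨pt, h, k, f⟩ : FactObj P g) = ⟨pt, h', k', f'⟩ := by
  subst hh; subst hk; rfl

end CategoryTheory

namespace DSBAux

open CategoryTheory

variable {A B C D : Type u}
  [Category.{u} A] [Category.{u} B] [Category.{u} C] [Category.{u} D]
  (Q : A ⥤ B) (M : C ⥤ D) (G : A ⥤ C) (H : B ⥤ D) (hsq : Q ⋙ H = G ⋙ M)

/-- Object part of the square equality. -/
theorem ea (hsq : Q ⋙ H = G ⋙ M) (a : A) : H.obj (Q.obj a) = M.obj (G.obj a) :=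
  Functor.congr_obj hsq a

/-- Transport of factorizations along a commutative square. -/
def trans (hsq : Q ⋙ H = G ⋙ M) {b c : B} (g : b ⟶ c) {b' c' : D}
    (eb : b' = H.obj b) (ec : H.obj c = c')
    (g' : b' ⟶ c') (hg : g' = eqToHom eb ≫ H.map g ≫ eqToHom ec) :
    FactObj Q g ⥤ FactObj M g' where
  obj p := ⟨G.obj p.pt,
    eqToHom eb ≫ H.map p.h ≫ eqToHom (ea Q M G H hsq p.pt),
    eqToHom (ea Q M G H hsq p.pt).symm ≫ H.map p.k ≫ eqToHom ec, by
      have hm : H.map p.h ≫ H.map p.k = H.map g := by rw [← H.map_comp, p.fac]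
      rw [hg, ← hm]
      simp⟩
  map {p q} u := ⟨G.map u.1, by
      have hc := Functor.congr_hom hsq u.1
      simp only [Functor.comp_map] at hc
      have hm : H.map p.h ≫ H.map (Q.map u.1) = H.map q.h := by rw [← H.map_comp, u.2.1]
      dsimp only
      rw [← hm, hc]
      simp, by
      have hc := Functor.congr_hom hsq u.1
      simp only [Functor.comp_map] at hc
      have hm : H.map (Q.map u.1) ≫ H.map q.k = H.map p.k := by rw [← H.map_comp, u.2.2]
      dsimp only
      rw [← hm, hc]
      simp⟩
  map_id p := Subtype.ext (G.map_id p.pt)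
  map_comp u v := Subtype.ext (G.map_comp u.1 v.1)

end DSBAux

namespace CategoryTheory

variable {E B : Type u} [Category.{u} E] [Category.{u} B] in
/-- Field equalities coming from an equality of split lifts. -/
theorem SplitLift.eq_b₀ {P : E ⥤ B} {b c : B} {g : b ⟶ c} {e e' : E}
    {h : b ⟶ P.obj e} {k : P.obj e ⟶ b} {h' : c ⟶ P.obj e'} {k' : P.obj e' ⟶ c}
    {L L' : SplitLift P g h k h' k'} (w : L = L') : L.b₀ = L'.b₀ := by subst w; rfl

variable {E B : Type u} [Category.{u} E] [Category.{u} B]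
variable {P : E ⥤ B} {b c : B} {g : b ⟶ c} {e e' : E}
    {h : b ⟶ P.obj e} {k : P.obj e ⟶ b} {h' : c ⟶ P.obj e'} {k' : P.obj e' ⟶ c}
    {L L' : SplitLift P g h k h' k'}

theorem SplitLift.eq_c₀ (w : L = L') : L.c₀ = L'.c₀ := by subst w; rfl

theorem SplitLift.eq_h₀ (w : L = L') :
    L.h₀ = eqToHom (SplitLift.eq_b₀ w) ≫ L'.h₀ := by subst w; simp

theorem SplitLift.eq_k₀ (w : L = L') :
    L.k₀ = L'.k₀ ≫ eqToHom (SplitLift.eq_b₀ w).symm := by subst w; simp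

theorem SplitLift.eq_g₀ (w : L = L') :
    L.g₀ = eqToHom (SplitLift.eq_b₀ w) ≫ L'.g₀ ≫ eqToHom (SplitLift.eq_c₀ w).symm := by
  subst w; simp

theorem SplitLift.eq_h₀' (w : L = L') :
    L.h₀' = eqToHom (SplitLift.eq_c₀ w) ≫ L'.h₀' := by subst w; simp

theorem SplitLift.eq_k₀' (w : L = L') :
    L.k₀' = L'.k₀' ≫ eqToHom (SplitLift.eq_c₀ w).symm := by subst w; simp

/-- The identity lift on the source side of a split lift. -/
def SplitLift.idB (L₀ : SplitLift P g h k h' k') (gb : b ⟶ b) (hgb : gb = 𝟙 b) :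
    SplitLift P gb h k h k where
  b₀ := L₀.b₀
  c₀ := L₀.b₀
  h₀ := L₀.h₀
  k₀ := L₀.k₀
  g₀ := 𝟙 _
  h₀' := L₀.h₀
  k₀' := L₀.k₀
  hb := L₀.hb
  hc := L₀.hb
  map_h₀ := L₀.map_h₀
  map_k₀ := L₀.map_k₀
  map_g₀ := by subst hgb; simp
  map_h₀' := L₀.map_h₀
  map_k₀' := L₀.map_k₀
  comm := by simp

/-- The identity lift on the target side of a split lift. -/
def SplitLift.idC (L₀ : SplitLift P g h k h' k') (gc : c ⟶ c) (hgc : gc = 𝟙 c) :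
    SplitLift P gc h' k' h' k' where
  b₀ := L₀.c₀
  c₀ := L₀.c₀
  h₀ := L₀.h₀'
  k₀ := L₀.k₀'
  g₀ := 𝟙 _
  h₀' := L₀.h₀'
  k₀' := L₀.k₀'
  hb := L₀.hc
  hc := L₀.hc
  map_h₀ := L₀.map_h₀'
  map_k₀ := L₀.map_k₀'
  map_g₀ := by subst hgc; simp
  map_h₀' := L₀.map_h₀'
  map_k₀' := L₀.map_k₀'
  comm := by simp

end CategoryTheory


namespace DSBAux

open CategoryTheory

variable {A B C D : Type u}
  [Category.{u} A] [Category.{u} B] [Category.{u} C] [Category.{u} D]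

/-- All the data of a lifting problem. -/
structure Ctx (A B C D : Type u)
    [Category.{u} A] [Category.{u} B] [Category.{u} C] [Category.{u} D] where
  Q : A ⥤ B
  M : C ⥤ D
  G : A ⥤ C
  H : B ⥤ D
  hQ : Q.IsLaxEpi
  hM : IsDSB M
  hsq : Q ⋙ H = G ⋙ M

namespace Ctx

variable (S : Ctx A B C D)

/-- A chosen splitting of each object of `B` through `Q`. -/
noncomputable def sp (b : B) : FactObj S.Q (𝟙 b) :=
  (LaxEpiAux.factObj_nonempty S.hQ (𝟙 b)).some

/-- The chosen splitting object in `C`. -/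
noncomputable abbrev e (b : B) : C := S.G.obj (S.sp b).pt

theorem ea' (b : B) : S.H.obj (S.Q.obj (S.sp b).pt) = S.M.obj (S.e b) :=
  ea S.Q S.M S.G S.H S.hsq _

theorem eaa (a : A) : S.H.obj (S.Q.obj a) = S.M.obj (S.G.obj a) :=
  ea S.Q S.M S.G S.H S.hsq a

/-- The splitting morphisms in `D`. -/
noncomputable def sh (b : B) : S.H.obj b ⟶ S.M.obj (S.e b) :=
  S.H.map (S.sp b).h ≫ eqToHom (S.ea' b)

noncomputable def sk (b : B) : S.M.obj (S.e b) ⟶ S.H.obj b :=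
  eqToHom (S.ea' b).symm ≫ S.H.map (S.sp b).k

theorem sh_sk (b : B) : S.sh b ≫ S.sk b = 𝟙 (S.H.obj b) := by
  have : S.H.map (S.sp b).h ≫ S.H.map (S.sp b).k = S.H.map (𝟙 b) := by
    rw [← S.H.map_comp, (S.sp b).fac]
  simp only [sh, sk, Category.assoc, eqToHom_trans_assoc, eqToHom_refl, Category.id_comp]
  rw [this, S.H.map_id]

theorem split (b : B) : IsPSplit S.M (S.e b) (S.sh b) (S.sk b) := by
  refine ⟨S.sh_sk b, ?_⟩
  have hz := LaxEpiAux.factObj_zigzag S.hQ ((S.sp b).k ≫ (S.sp b).h)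
    ⟨(S.sp b).pt, 𝟙 _, (S.sp b).k ≫ (S.sp b).h, Category.id_comp _⟩
    ⟨(S.sp b).pt, (S.sp b).k ≫ (S.sp b).h, 𝟙 _, Category.comp_id _⟩
  have hg : S.sk b ≫ S.sh b =
      eqToHom (S.ea' b).symm ≫ S.H.map ((S.sp b).k ≫ (S.sp b).h) ≫ eqToHom (S.ea' b) := by
    simp [sh, sk, S.H.map_comp]
  have hz2 := zigzag_obj_of_zigzag
    (trans S.Q S.M S.G S.H S.hsq ((S.sp b).k ≫ (S.sp b).h)
      (S.ea' b).symm (S.ea' b) (S.sk b ≫ S.sh b) hg) hz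
  have e1 : (trans S.Q S.M S.G S.H S.hsq ((S.sp b).k ≫ (S.sp b).h)
      (S.ea' b).symm (S.ea' b) (S.sk b ≫ S.sh b) hg).obj
        ⟨(S.sp b).pt, 𝟙 _, (S.sp b).k ≫ (S.sp b).h, Category.id_comp _⟩ =
      ⟨S.e b, 𝟙 (S.M.obj (S.e b)), S.sk b ≫ S.sh b, Category.id_comp _⟩ :=
    FactObj.ext' (by simp [trans, e]) (by simp [trans, sh, sk, S.H.map_comp])
  have e2 : (trans S.Q S.M S.G S.H S.hsq ((S.sp b).k ≫ (S.sp b).h)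
      (S.ea' b).symm (S.ea' b) (S.sk b ≫ S.sh b) hg).obj
        ⟨(S.sp b).pt, (S.sp b).k ≫ (S.sp b).h, 𝟙 _, Category.comp_id _⟩ =
      ⟨S.e b, S.sk b ≫ S.sh b, 𝟙 (S.M.obj (S.e b)), Category.comp_id _⟩ :=
    FactObj.ext' (by simp [trans, sh, sk, S.H.map_comp]) (by simp [trans, e])
  rwa [e1, e2] at hz2

theorem zigzag_main {b c : B} (g : b ⟶ c) :
    Zigzag (J := FactObj S.M (S.H.map g))
      ⟨S.e b, S.sh b, S.sk b ≫ S.H.map g, by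
        rw [← Category.assoc, S.sh_sk b, Category.id_comp]⟩
      ⟨S.e c, S.H.map g ≫ S.sh c, S.sk c, by
        rw [Category.assoc, S.sh_sk c, Category.comp_id]⟩ := by
  have hz := LaxEpiAux.factObj_zigzag S.hQ g
    ⟨(S.sp b).pt, (S.sp b).h, (S.sp b).k ≫ g, by
      rw [← Category.assoc, (S.sp b).fac, Category.id_comp]⟩
    ⟨(S.sp c).pt, g ≫ (S.sp c).h, (S.sp c).k, by
      rw [Category.assoc, (S.sp c).fac, Category.comp_id]⟩
  have hg : S.H.map g = eqToHom rfl ≫ S.H.map g ≫ eqToHom rfl := by simp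
  have hz2 := zigzag_obj_of_zigzag
    (trans S.Q S.M S.G S.H S.hsq g rfl rfl (S.H.map g) hg) hz
  have e1 : (trans S.Q S.M S.G S.H S.hsq g rfl rfl (S.H.map g) hg).obj
      ⟨(S.sp b).pt, (S.sp b).h, (S.sp b).k ≫ g, by
        rw [← Category.assoc, (S.sp b).fac, Category.id_comp]⟩ =
      ⟨S.e b, S.sh b, S.sk b ≫ S.H.map g, by
        rw [← Category.assoc, S.sh_sk b, Category.id_comp]⟩ :=
    FactObj.ext' (by simp [trans, sh]) (by simp [trans, sk, S.H.map_comp])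
  have e2 : (trans S.Q S.M S.G S.H S.hsq g rfl rfl (S.H.map g) hg).obj
      ⟨(S.sp c).pt, g ≫ (S.sp c).h, (S.sp c).k, by
        rw [Category.assoc, (S.sp c).fac, Category.comp_id]⟩ =
      ⟨S.e c, S.H.map g ≫ S.sh c, S.sk c, by
        rw [Category.assoc, S.sh_sk c, Category.comp_id]⟩ :=
    FactObj.ext' (by simp [trans, sh, S.H.map_comp]) (by simp [trans, sk])
  rwa [e1, e2] at hz2

theorem ex {b c : B} (g : b ⟶ c) :
    ∃ L : SplitLift S.M (S.H.map g) (S.sh b) (S.sk b) (S.sh c) (S.sk c),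
      ∀ L', L' = L :=
  S.hM (S.H.map g) (S.sh b) (S.sk b) (S.sh c) (S.sk c) (S.split b) (S.split c)
    (S.zigzag_main g)

/-- The chosen lift of the split diagram of `g`. -/
noncomputable def lift {b c : B} (g : b ⟶ c) :
    SplitLift S.M (S.H.map g) (S.sh b) (S.sk b) (S.sh c) (S.sk c) :=
  (S.ex g).choose

theorem lift_uniq {b c : B} (g : b ⟶ c)
    (L' : SplitLift S.M (S.H.map g) (S.sh b) (S.sk b) (S.sh c) (S.sk c)) :
    L' = S.lift g :=
  (S.ex g).choose_spec L'


theorem idLiftB_aux (S : Ctx A B C D) (b : B) :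
    S.M.map (𝟙 ((S.lift (𝟙 b)).b₀)) = 𝟙 (S.M.obj ((S.lift (𝟙 b)).b₀)) := S.M.map_id _

/-- The lift of the identity diagram obtained from the source side of `S.lift g`. -/
noncomputable abbrev idLiftB {b c : B} (g : b ⟶ c) :
    SplitLift S.M (S.H.map (𝟙 b)) (S.sh b) (S.sk b) (S.sh b) (S.sk b) where
  b₀ := (S.lift g).b₀
  c₀ := (S.lift g).b₀
  h₀ := (S.lift g).h₀
  k₀ := (S.lift g).k₀
  g₀ := 𝟙 _
  h₀' := (S.lift g).h₀
  k₀' := (S.lift g).k₀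
  hb := (S.lift g).hb
  hc := (S.lift g).hb
  map_h₀ := (S.lift g).map_h₀
  map_k₀ := (S.lift g).map_k₀
  map_g₀ := by simp
  map_h₀' := (S.lift g).map_h₀
  map_k₀' := (S.lift g).map_k₀
  comm := by simp

/-- The lift of the identity diagram obtained from the target side of `S.lift g`. -/
noncomputable def idLiftC {b c : B} (g : b ⟶ c) :
    SplitLift S.M (S.H.map (𝟙 c)) (S.sh c) (S.sk c) (S.sh c) (S.sk c) where
  b₀ := (S.lift g).c₀
  c₀ := (S.lift g).c₀
  h₀ := (S.lift g).h₀'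
  k₀ := (S.lift g).k₀'
  g₀ := 𝟙 _
  h₀' := (S.lift g).h₀'
  k₀' := (S.lift g).k₀'
  hb := (S.lift g).hc
  hc := (S.lift g).hc
  map_h₀ := (S.lift g).map_h₀'
  map_k₀ := (S.lift g).map_k₀'
  map_g₀ := by simp
  map_h₀' := (S.lift g).map_h₀'
  map_k₀' := (S.lift g).map_k₀'
  comm := by simp

/-- The object function of the diagonal functor. -/
noncomputable abbrev Tobj (b : B) : C := (S.lift (𝟙 b)).b₀

theorem b₀_eq {b c : B} (g : b ⟶ c) : S.Tobj b = (S.lift g).b₀ :=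
  (SplitLift.eq_b₀ (S.lift_uniq (𝟙 b) (S.idLiftB g))).symm

theorem c₀_eq {b c : B} (g : b ⟶ c) : (S.lift g).c₀ = S.Tobj c :=
  SplitLift.eq_b₀ (S.lift_uniq (𝟙 c) (S.idLiftC g))

theorem mid {b c d : B} (g : b ⟶ c) (f : c ⟶ d) : (S.lift g).c₀ = (S.lift f).b₀ :=
  (S.c₀_eq g).trans (S.b₀_eq f)

theorem mid_h₀ {b c d : B} (g : b ⟶ c) (f : c ⟶ d) :
    (S.lift g).h₀' = eqToHom (S.mid g f) ≫ (S.lift f).h₀ := by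
  have w : S.idLiftC g = S.idLiftB f :=
    (S.lift_uniq (𝟙 c) (S.idLiftC g)).trans (S.lift_uniq (𝟙 c) (S.idLiftB f)).symm
  exact SplitLift.eq_h₀ w

theorem mid_k₀ {b c d : B} (g : b ⟶ c) (f : c ⟶ d) :
    (S.lift g).k₀' = (S.lift f).k₀ ≫ eqToHom (S.mid g f).symm := by
  have w : S.idLiftC g = S.idLiftB f :=
    (S.lift_uniq (𝟙 c) (S.idLiftC g)).trans (S.lift_uniq (𝟙 c) (S.idLiftB f)).symm
  exact SplitLift.eq_k₀ w

/-- The composite of two chosen lifts, as a lift for the composite. -/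
noncomputable abbrev compLift {b c d : B} (g : b ⟶ c) (f : c ⟶ d) :
    SplitLift S.M (S.H.map (g ≫ f)) (S.sh b) (S.sk b) (S.sh d) (S.sk d) where
  b₀ := (S.lift g).b₀
  c₀ := (S.lift f).c₀
  h₀ := (S.lift g).h₀
  k₀ := (S.lift g).k₀
  g₀ := (S.lift g).g₀ ≫ eqToHom (S.mid g f) ≫ (S.lift f).g₀
  h₀' := (S.lift f).h₀'
  k₀' := (S.lift f).k₀'
  hb := (S.lift g).hb
  hc := (S.lift f).hc
  map_h₀ := (S.lift g).map_h₀
  map_k₀ := (S.lift g).map_k₀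
  map_g₀ := by
    rw [S.M.map_comp, S.M.map_comp, (S.lift g).map_g₀, (S.lift f).map_g₀, eqToHom_map,
      S.H.map_comp]
    simp
  map_h₀' := (S.lift f).map_h₀'
  map_k₀' := (S.lift f).map_k₀'
  comm := by
    have c1 := (S.lift g).comm
    rw [S.mid_h₀ g f, S.mid_k₀ g f] at c1
    have c2 := (S.lift f).comm
    calc (S.lift g).h₀ ≫ (S.lift g).k₀ ≫ (S.lift g).g₀ ≫ eqToHom (S.mid g f) ≫ (S.lift f).g₀
        = ((S.lift g).h₀ ≫ (S.lift g).k₀ ≫ (S.lift g).g₀) ≫ eqToHom (S.mid g f) ≫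
            (S.lift f).g₀ := by simp only [Category.assoc]
      _ = ((S.lift g).g₀ ≫ (eqToHom (S.mid g f) ≫ (S.lift f).h₀) ≫ (S.lift f).k₀ ≫
            eqToHom (S.mid g f).symm) ≫ eqToHom (S.mid g f) ≫ (S.lift f).g₀ := by rw [c1]
      _ = (S.lift g).g₀ ≫ eqToHom (S.mid g f) ≫ (S.lift f).h₀ ≫ (S.lift f).k₀ ≫
            (S.lift f).g₀ := by simp
      _ = (S.lift g).g₀ ≫ eqToHom (S.mid g f) ≫ (S.lift f).g₀ ≫ (S.lift f).h₀' ≫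
            (S.lift f).k₀' := by rw [c2]
      _ = ((S.lift g).g₀ ≫ eqToHom (S.mid g f) ≫ (S.lift f).g₀) ≫ (S.lift f).h₀' ≫
            (S.lift f).k₀' := by simp only [Category.assoc]

/-- The diagonal functor. -/
noncomputable def TF : B ⥤ C where
  obj := S.Tobj
  map {b c} g := eqToHom (S.b₀_eq g) ≫ (S.lift g).g₀ ≫ eqToHom (S.c₀_eq g)
  map_id b := by
    have w := S.lift_uniq (𝟙 b) (S.idLiftB (𝟙 b))
    rw [SplitLift.eq_g₀ w.symm]
    simp [idLiftB]
  map_comp {b c d} g f := by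
    have w := S.lift_uniq (g ≫ f) (S.compLift g f)
    rw [SplitLift.eq_g₀ w.symm]
    simp [compLift]


theorem MTobj (b : B) : S.M.obj (S.Tobj b) = S.H.obj b := (S.lift (𝟙 b)).hb

theorem splitGa (a : A) :
    IsPSplit S.M (S.G.obj a) (eqToHom (S.eaa a)) (eqToHom (S.eaa a).symm) := by
  refine ⟨by simp, ?_⟩
  have he : (⟨S.G.obj a, 𝟙 _, eqToHom (S.eaa a).symm ≫ eqToHom (S.eaa a), Category.id_comp _⟩ :
      FactObj S.M (eqToHom (S.eaa a).symm ≫ eqToHom (S.eaa a))) =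
      ⟨S.G.obj a, eqToHom (S.eaa a).symm ≫ eqToHom (S.eaa a), 𝟙 _, Category.comp_id _⟩ :=
    FactObj.ext' (by simp) (by simp)
  rw [he]

theorem exGa (a : A) :
    ∃ L : SplitLift S.M (S.H.map (𝟙 (S.Q.obj a))) (eqToHom (S.eaa a)) (eqToHom (S.eaa a).symm)
        (eqToHom (S.eaa a)) (eqToHom (S.eaa a).symm), ∀ L', L' = L := by
  refine S.hM _ _ _ _ _ (S.splitGa a) (S.splitGa a) ?_
  have he : (⟨S.G.obj a, eqToHom (S.eaa a), eqToHom (S.eaa a).symm ≫ S.H.map (𝟙 (S.Q.obj a)), by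
      simp⟩ : FactObj S.M (S.H.map (𝟙 (S.Q.obj a)))) =
      ⟨S.G.obj a, S.H.map (𝟙 (S.Q.obj a)) ≫ eqToHom (S.eaa a), eqToHom (S.eaa a).symm, by
      simp⟩ :=
    FactObj.ext' (by simp) (by simp)
  rw [he]

/-- The trivial lift of the identity diagram at `G.obj a`. -/
noncomputable def idGa (a : A) :
    SplitLift S.M (S.H.map (𝟙 (S.Q.obj a))) (eqToHom (S.eaa a)) (eqToHom (S.eaa a).symm)
      (eqToHom (S.eaa a)) (eqToHom (S.eaa a).symm) where
  b₀ := S.G.obj a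
  c₀ := S.G.obj a
  h₀ := 𝟙 _
  k₀ := 𝟙 _
  g₀ := 𝟙 _
  h₀' := 𝟙 _
  k₀' := 𝟙 _
  hb := (S.eaa a).symm
  hc := (S.eaa a).symm
  map_h₀ := by simp
  map_k₀ := by simp
  map_g₀ := by simp
  map_h₀' := by simp
  map_k₀' := by simp
  comm := by simp

theorem gaga (a : A)
    (L' : SplitLift S.M (S.H.map (𝟙 (S.Q.obj a))) (eqToHom (S.eaa a)) (eqToHom (S.eaa a).symm)
      (eqToHom (S.eaa a)) (eqToHom (S.eaa a).symm)) : L' = S.idGa a :=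
  ((S.exGa a).choose_spec L').trans ((S.exGa a).choose_spec (S.idGa a)).symm

theorem zigzagL1 (a : A) :
    Zigzag (J := FactObj S.M (S.H.map (𝟙 (S.Q.obj a))))
      ⟨S.e (S.Q.obj a), S.sh (S.Q.obj a), S.sk (S.Q.obj a) ≫ S.H.map (𝟙 (S.Q.obj a)), by
        rw [← Category.assoc, S.sh_sk, Category.id_comp]⟩
      ⟨S.G.obj a, S.H.map (𝟙 (S.Q.obj a)) ≫ eqToHom (S.eaa a), eqToHom (S.eaa a).symm, by
        simp⟩ := by
  have hz := LaxEpiAux.factObj_zigzag S.hQ (𝟙 (S.Q.obj a))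
    ⟨(S.sp (S.Q.obj a)).pt, (S.sp (S.Q.obj a)).h, (S.sp (S.Q.obj a)).k ≫ 𝟙 (S.Q.obj a), by
      rw [← Category.assoc, (S.sp (S.Q.obj a)).fac, Category.id_comp]⟩
    ⟨a, 𝟙 (S.Q.obj a), 𝟙 (S.Q.obj a), Category.id_comp _⟩
  have hg : S.H.map (𝟙 (S.Q.obj a)) =
      eqToHom rfl ≫ S.H.map (𝟙 (S.Q.obj a)) ≫ eqToHom rfl := by simp
  have hz2 := zigzag_obj_of_zigzag
    (trans S.Q S.M S.G S.H S.hsq (𝟙 (S.Q.obj a)) rfl rfl (S.H.map (𝟙 (S.Q.obj a))) hg) hz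
  have e1 : (trans S.Q S.M S.G S.H S.hsq (𝟙 (S.Q.obj a)) rfl rfl
      (S.H.map (𝟙 (S.Q.obj a))) hg).obj
      ⟨(S.sp (S.Q.obj a)).pt, (S.sp (S.Q.obj a)).h, (S.sp (S.Q.obj a)).k ≫ 𝟙 (S.Q.obj a), by
        rw [← Category.assoc, (S.sp (S.Q.obj a)).fac, Category.id_comp]⟩ =
      ⟨S.e (S.Q.obj a), S.sh (S.Q.obj a), S.sk (S.Q.obj a) ≫ S.H.map (𝟙 (S.Q.obj a)), by
        rw [← Category.assoc, S.sh_sk, Category.id_comp]⟩ :=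
    FactObj.ext' (by simp [trans, sh]) (by simp [trans, sk, S.H.map_comp])
  have e2 : (trans S.Q S.M S.G S.H S.hsq (𝟙 (S.Q.obj a)) rfl rfl
      (S.H.map (𝟙 (S.Q.obj a))) hg).obj
      ⟨a, 𝟙 (S.Q.obj a), 𝟙 (S.Q.obj a), Category.id_comp _⟩ =
      ⟨S.G.obj a, S.H.map (𝟙 (S.Q.obj a)) ≫ eqToHom (S.eaa a), eqToHom (S.eaa a).symm, by
        simp⟩ :=
    FactObj.ext' (by simp [trans]) (by simp [trans])
  rwa [e1, e2] at hz2

theorem zigzagL2 (a : A) :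
    Zigzag (J := FactObj S.M (S.H.map (𝟙 (S.Q.obj a))))
      ⟨S.G.obj a, eqToHom (S.eaa a), eqToHom (S.eaa a).symm ≫ S.H.map (𝟙 (S.Q.obj a)), by
        simp⟩
      ⟨S.e (S.Q.obj a), S.H.map (𝟙 (S.Q.obj a)) ≫ S.sh (S.Q.obj a), S.sk (S.Q.obj a), by
        rw [Category.assoc, S.sh_sk, Category.comp_id]⟩ := by
  have hz := LaxEpiAux.factObj_zigzag S.hQ (𝟙 (S.Q.obj a))
    ⟨a, 𝟙 (S.Q.obj a), 𝟙 (S.Q.obj a), Category.id_comp _⟩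
    ⟨(S.sp (S.Q.obj a)).pt, (S.sp (S.Q.obj a)).h, (S.sp (S.Q.obj a)).k,
      (S.sp (S.Q.obj a)).fac⟩
  have hg : S.H.map (𝟙 (S.Q.obj a)) =
      eqToHom rfl ≫ S.H.map (𝟙 (S.Q.obj a)) ≫ eqToHom rfl := by simp
  have hz2 := zigzag_obj_of_zigzag
    (trans S.Q S.M S.G S.H S.hsq (𝟙 (S.Q.obj a)) rfl rfl (S.H.map (𝟙 (S.Q.obj a))) hg) hz
  have e1 : (trans S.Q S.M S.G S.H S.hsq (𝟙 (S.Q.obj a)) rfl rfl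
      (S.H.map (𝟙 (S.Q.obj a))) hg).obj
      ⟨a, 𝟙 (S.Q.obj a), 𝟙 (S.Q.obj a), Category.id_comp _⟩ =
      ⟨S.G.obj a, eqToHom (S.eaa a), eqToHom (S.eaa a).symm ≫ S.H.map (𝟙 (S.Q.obj a)), by
        simp⟩ :=
    FactObj.ext' (by simp [trans]) (by simp [trans])
  have e2 : (trans S.Q S.M S.G S.H S.hsq (𝟙 (S.Q.obj a)) rfl rfl
      (S.H.map (𝟙 (S.Q.obj a))) hg).obj
      ⟨(S.sp (S.Q.obj a)).pt, (S.sp (S.Q.obj a)).h, (S.sp (S.Q.obj a)).k,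
        (S.sp (S.Q.obj a)).fac⟩ =
      ⟨S.e (S.Q.obj a), S.H.map (𝟙 (S.Q.obj a)) ≫ S.sh (S.Q.obj a), S.sk (S.Q.obj a), by
        rw [Category.assoc, S.sh_sk, Category.comp_id]⟩ :=
    FactObj.ext' (by simp [trans, sh]) (by simp [trans, sk])
  rwa [e1, e2] at hz2

theorem exL1 (a : A) :
    ∃ L : SplitLift S.M (S.H.map (𝟙 (S.Q.obj a))) (S.sh (S.Q.obj a)) (S.sk (S.Q.obj a))
        (eqToHom (S.eaa a)) (eqToHom (S.eaa a).symm), ∀ L', L' = L :=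
  S.hM _ _ _ _ _ (S.split (S.Q.obj a)) (S.splitGa a) (S.zigzagL1 a)

noncomputable def L1 (a : A) :
    SplitLift S.M (S.H.map (𝟙 (S.Q.obj a))) (S.sh (S.Q.obj a)) (S.sk (S.Q.obj a))
      (eqToHom (S.eaa a)) (eqToHom (S.eaa a).symm) := (S.exL1 a).choose

theorem exL2 (a : A) :
    ∃ L : SplitLift S.M (S.H.map (𝟙 (S.Q.obj a))) (eqToHom (S.eaa a)) (eqToHom (S.eaa a).symm)
        (S.sh (S.Q.obj a)) (S.sk (S.Q.obj a)), ∀ L', L' = L :=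
  S.hM _ _ _ _ _ (S.splitGa a) (S.split (S.Q.obj a)) (S.zigzagL2 a)

noncomputable def L2 (a : A) :
    SplitLift S.M (S.H.map (𝟙 (S.Q.obj a))) (eqToHom (S.eaa a)) (eqToHom (S.eaa a).symm)
      (S.sh (S.Q.obj a)) (S.sk (S.Q.obj a)) := (S.exL2 a).choose

theorem L1_b₀ (a : A) : (S.L1 a).b₀ = S.Tobj (S.Q.obj a) :=
  SplitLift.eq_b₀ (S.lift_uniq (𝟙 (S.Q.obj a))
    ((S.L1 a).idB (S.H.map (𝟙 (S.Q.obj a))) (S.H.map_id _)))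

theorem L1_c₀ (a : A) : (S.L1 a).c₀ = S.G.obj a :=
  SplitLift.eq_b₀ (S.gaga a ((S.L1 a).idC (S.H.map (𝟙 (S.Q.obj a))) (S.H.map_id _)))

theorem L1_h₀' (a : A) : (S.L1 a).h₀' = eqToHom (S.L1_c₀ a) := by
  have := SplitLift.eq_h₀ (S.gaga a ((S.L1 a).idC (S.H.map (𝟙 (S.Q.obj a))) (S.H.map_id _)))
  exact this.trans (Category.comp_id _)

theorem L1_k₀' (a : A) : (S.L1 a).k₀' = eqToHom (S.L1_c₀ a).symm := by
  have := SplitLift.eq_k₀ (S.gaga a ((S.L1 a).idC (S.H.map (𝟙 (S.Q.obj a))) (S.H.map_id _)))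
  exact this.trans (Category.id_comp _)

theorem L2_b₀ (a : A) : (S.L2 a).b₀ = S.G.obj a :=
  SplitLift.eq_b₀ (S.gaga a ((S.L2 a).idB (S.H.map (𝟙 (S.Q.obj a))) (S.H.map_id _)))

theorem L2_c₀ (a : A) : (S.L2 a).c₀ = S.Tobj (S.Q.obj a) :=
  SplitLift.eq_b₀ (S.lift_uniq (𝟙 (S.Q.obj a))
    ((S.L2 a).idC (S.H.map (𝟙 (S.Q.obj a))) (S.H.map_id _)))

theorem L2_h₀ (a : A) : (S.L2 a).h₀ = eqToHom (S.L2_b₀ a) := by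
  have := SplitLift.eq_h₀ (S.gaga a ((S.L2 a).idB (S.H.map (𝟙 (S.Q.obj a))) (S.H.map_id _)))
  exact this.trans (Category.comp_id _)

theorem L2_k₀ (a : A) : (S.L2 a).k₀ = eqToHom (S.L2_b₀ a).symm := by
  have := SplitLift.eq_k₀ (S.gaga a ((S.L2 a).idB (S.H.map (𝟙 (S.Q.obj a))) (S.H.map_id _)))
  exact this.trans (Category.id_comp _)

/-- The comparison morphisms between `T (Q a)` and `G a`. -/
noncomputable def φ (a : A) : S.Tobj (S.Q.obj a) ⟶ S.G.obj a :=
  eqToHom (S.L1_b₀ a).symm ≫ (S.L1 a).g₀ ≫ eqToHom (S.L1_c₀ a)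

noncomputable def ψ (a : A) : S.G.obj a ⟶ S.Tobj (S.Q.obj a) :=
  eqToHom (S.L2_b₀ a).symm ≫ (S.L2 a).g₀ ≫ eqToHom (S.L2_c₀ a)

theorem Mφ (a : A) :
    S.M.map (S.φ a) = eqToHom ((S.MTobj (S.Q.obj a)).trans (S.eaa a)) := by
  simp only [φ, S.M.map_comp, eqToHom_map, (S.L1 a).map_g₀]
  simp

theorem Mψ (a : A) :
    S.M.map (S.ψ a) = eqToHom ((S.eaa a).symm.trans (S.MTobj (S.Q.obj a)).symm) := by
  simp only [ψ, S.M.map_comp, eqToHom_map, (S.L2 a).map_g₀]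
  simp

/-- The lift of the identity diagram at `G a` induced by the comparison morphisms. -/
noncomputable def phiPsiLift (a : A) :
    SplitLift S.M (S.H.map (𝟙 (S.Q.obj a))) (eqToHom (S.eaa a)) (eqToHom (S.eaa a).symm)
      (eqToHom (S.eaa a)) (eqToHom (S.eaa a).symm) where
  b₀ := S.Tobj (S.Q.obj a)
  c₀ := S.Tobj (S.Q.obj a)
  h₀ := S.φ a
  k₀ := S.ψ a
  g₀ := 𝟙 _
  h₀' := S.φ a
  k₀' := S.ψ a
  hb := S.MTobj (S.Q.obj a)
  hc := S.MTobj (S.Q.obj a)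
  map_h₀ := by rw [S.Mφ a]; simp
  map_k₀ := by rw [S.Mψ a]; simp
  map_g₀ := by simp
  map_h₀' := by rw [S.Mφ a]; simp
  map_k₀' := by rw [S.Mψ a]; simp
  comm := by simp

/-- The key object equality: `T` agrees with `G` on images of `Q`. -/
theorem Tobj_Q (a : A) : S.Tobj (S.Q.obj a) = S.G.obj a :=
  SplitLift.eq_b₀ (S.gaga a (S.phiPsiLift a))

theorem φ_eq (a : A) : S.φ a = eqToHom (S.Tobj_Q a) := by
  have := SplitLift.eq_h₀ (S.gaga a (S.phiPsiLift a))
  simpa [idGa, phiPsiLift] using this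

theorem ψ_eq (a : A) : S.ψ a = eqToHom (S.Tobj_Q a).symm := by
  have := SplitLift.eq_k₀ (S.gaga a (S.phiPsiLift a))
  simpa [idGa, phiPsiLift] using this

theorem L1_g₀ (a : A) :
    (S.L1 a).g₀ = eqToHom ((S.L1_b₀ a).trans ((S.Tobj_Q a).trans (S.L1_c₀ a).symm)) := by
  calc (S.L1 a).g₀ = eqToHom (S.L1_b₀ a) ≫ S.φ a ≫ eqToHom (S.L1_c₀ a).symm := by
        simp [φ]
    _ = _ := by rw [S.φ_eq a]; simp

theorem L2_g₀ (a : A) :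
    (S.L2 a).g₀ = eqToHom ((S.L2_b₀ a).trans ((S.Tobj_Q a).symm.trans (S.L2_c₀ a).symm)) := by
  calc (S.L2 a).g₀ = eqToHom (S.L2_b₀ a) ≫ S.ψ a ≫ eqToHom (S.L2_c₀ a).symm := by
        simp [ψ]
    _ = _ := by rw [S.ψ_eq a]; simp

/-- A lift for `Q.map w` constructed from `G.map w`. -/
noncomputable abbrev mixedLift {a a' : A} (w : a ⟶ a') :
    SplitLift S.M (S.H.map (S.Q.map w)) (S.sh (S.Q.obj a)) (S.sk (S.Q.obj a))
      (S.sh (S.Q.obj a')) (S.sk (S.Q.obj a')) where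
  b₀ := (S.L1 a).b₀
  c₀ := (S.L2 a').c₀
  h₀ := (S.L1 a).h₀
  k₀ := (S.L1 a).k₀
  g₀ := (S.L1 a).g₀ ≫ eqToHom (S.L1_c₀ a) ≫ S.G.map w ≫ eqToHom (S.L2_b₀ a').symm ≫
    (S.L2 a').g₀
  h₀' := (S.L2 a').h₀'
  k₀' := (S.L2 a').k₀'
  hb := (S.L1 a).hb
  hc := (S.L2 a').hc
  map_h₀ := (S.L1 a).map_h₀
  map_k₀ := (S.L1 a).map_k₀
  map_g₀ := by
    have hw := Functor.congr_hom S.hsq w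
    simp only [Functor.comp_map] at hw
    have hw' : S.M.map (S.G.map w) =
        eqToHom (S.eaa a).symm ≫ S.H.map (S.Q.map w) ≫ eqToHom (S.eaa a') := by
      rw [hw]; simp
    rw [S.M.map_comp, S.M.map_comp, S.M.map_comp, S.M.map_comp, eqToHom_map, eqToHom_map,
      (S.L1 a).map_g₀, (S.L2 a').map_g₀, hw']
    simp
  map_h₀' := (S.L2 a').map_h₀'
  map_k₀' := (S.L2 a').map_k₀'
  comm := by
    have c1 := (S.L1 a).comm
    rw [S.L1_h₀' a, S.L1_k₀' a] at c1
    have c2 := (S.L2 a').comm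
    rw [S.L2_h₀ a', S.L2_k₀ a'] at c2
    calc (S.L1 a).h₀ ≫ (S.L1 a).k₀ ≫ (S.L1 a).g₀ ≫ eqToHom (S.L1_c₀ a) ≫ S.G.map w ≫
          eqToHom (S.L2_b₀ a').symm ≫ (S.L2 a').g₀
        = ((S.L1 a).h₀ ≫ (S.L1 a).k₀ ≫ (S.L1 a).g₀) ≫ eqToHom (S.L1_c₀ a) ≫ S.G.map w ≫
          eqToHom (S.L2_b₀ a').symm ≫ (S.L2 a').g₀ := by simp only [Category.assoc]
      _ = ((S.L1 a).g₀ ≫ eqToHom (S.L1_c₀ a) ≫ eqToHom (S.L1_c₀ a).symm) ≫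
          eqToHom (S.L1_c₀ a) ≫ S.G.map w ≫ eqToHom (S.L2_b₀ a').symm ≫ (S.L2 a').g₀ := by
          rw [c1]
      _ = (S.L1 a).g₀ ≫ eqToHom (S.L1_c₀ a) ≫ S.G.map w ≫ eqToHom (S.L2_b₀ a').symm ≫
          eqToHom (S.L2_b₀ a') ≫ eqToHom (S.L2_b₀ a').symm ≫ (S.L2 a').g₀ := by simp
      _ = (S.L1 a).g₀ ≫ eqToHom (S.L1_c₀ a) ≫ S.G.map w ≫ eqToHom (S.L2_b₀ a').symm ≫
          (S.L2 a').g₀ ≫ (S.L2 a').h₀' ≫ (S.L2 a').k₀' := by rw [c2]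
      _ = ((S.L1 a).g₀ ≫ eqToHom (S.L1_c₀ a) ≫ S.G.map w ≫ eqToHom (S.L2_b₀ a').symm ≫
          (S.L2 a').g₀) ≫ (S.L2 a').h₀' ≫ (S.L2 a').k₀' := by simp only [Category.assoc]

theorem TF_mapQ {a a' : A} (w : a ⟶ a') :
    S.TF.map (S.Q.map w) =
      eqToHom (S.Tobj_Q a) ≫ S.G.map w ≫ eqToHom (S.Tobj_Q a').symm := by
  have wu := S.lift_uniq (S.Q.map w) (S.mixedLift w)
  show eqToHom _ ≫ (S.lift (S.Q.map w)).g₀ ≫ eqToHom _ = _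
  rw [SplitLift.eq_g₀ wu.symm]
  simp [mixedLift, S.L1_g₀ a, S.L2_g₀ a']

theorem comp_left : S.Q ⋙ S.TF = S.G := by
  refine CategoryTheory.Functor.ext (fun a => S.Tobj_Q a) ?_
  intro a a' w
  exact S.TF_mapQ w

theorem comp_right : S.TF ⋙ S.M = S.H := by
  refine CategoryTheory.Functor.ext (fun b => S.MTobj b) ?_
  intro b c g
  show S.M.map (S.TF.map g) = _
  simp only [TF]
  rw [S.M.map_comp, S.M.map_comp, eqToHom_map, eqToHom_map, (S.lift g).map_g₀]
  simp

/-- The lift induced by any other diagonal functor. -/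
noncomputable abbrev primeLift (T' : B ⥤ C) (h1 : S.Q ⋙ T' = S.G) (h2 : T' ⋙ S.M = S.H)
    {b c : B} (g : b ⟶ c) :
    SplitLift S.M (S.H.map g) (S.sh b) (S.sk b) (S.sh c) (S.sk c) where
  b₀ := T'.obj b
  c₀ := T'.obj c
  h₀ := T'.map (S.sp b).h ≫ eqToHom (Functor.congr_obj h1 (S.sp b).pt)
  k₀ := eqToHom (Functor.congr_obj h1 (S.sp b).pt).symm ≫ T'.map (S.sp b).k
  g₀ := T'.map g
  h₀' := T'.map (S.sp c).h ≫ eqToHom (Functor.congr_obj h1 (S.sp c).pt)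
  k₀' := eqToHom (Functor.congr_obj h1 (S.sp c).pt).symm ≫ T'.map (S.sp c).k
  hb := Functor.congr_obj h2 b
  hc := Functor.congr_obj h2 c
  map_h₀ := by
    have hh := Functor.congr_hom h2 (S.sp b).h
    simp only [Functor.comp_map] at hh
    rw [S.M.map_comp, eqToHom_map, hh]
    simp [sh]
  map_k₀ := by
    have hh := Functor.congr_hom h2 (S.sp b).k
    simp only [Functor.comp_map] at hh
    rw [S.M.map_comp, eqToHom_map, hh]
    simp [sk]
  map_g₀ := by
    have hh := Functor.congr_hom h2 g
    simp only [Functor.comp_map] at hh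
    rw [hh]
  map_h₀' := by
    have hh := Functor.congr_hom h2 (S.sp c).h
    simp only [Functor.comp_map] at hh
    rw [S.M.map_comp, eqToHom_map, hh]
    simp [sh]
  map_k₀' := by
    have hh := Functor.congr_hom h2 (S.sp c).k
    simp only [Functor.comp_map] at hh
    rw [S.M.map_comp, eqToHom_map, hh]
    simp [sk]
  comm := by
    simp only [Category.assoc, eqToHom_trans_assoc, eqToHom_refl, Category.id_comp]
    rw [← T'.map_comp, ← T'.map_comp, ← T'.map_comp, ← T'.map_comp]
    congr 1
    rw [← Category.assoc, (S.sp b).fac, Category.id_comp, (S.sp c).fac, Category.comp_id]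

theorem unique (T' : B ⥤ C) (h1 : S.Q ⋙ T' = S.G) (h2 : T' ⋙ S.M = S.H) : T' = S.TF := by
  refine CategoryTheory.Functor.ext
    (fun b => SplitLift.eq_b₀ (S.lift_uniq (𝟙 b) (S.primeLift T' h1 h2 (𝟙 b)))) ?_
  intro b c g
  have wg := S.lift_uniq g (S.primeLift T' h1 h2 g)
  calc T'.map g = (show T'.obj b ⟶ T'.obj c from (S.primeLift T' h1 h2 g).g₀) := rfl
    _ = (show T'.obj b ⟶ T'.obj c from eqToHom _ ≫ (S.lift g).g₀ ≫ eqToHom _) := SplitLift.eq_g₀ wg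
    _ = _ := by simp [TF]; erw [eqToHom_trans]

end Ctx

end DSBAux

open CategoryTheory in
/-- Diagonal fill-in: given a lax epimorphism `Q : A ⥤ B` and a discrete splitting
bifibration `M : C ⥤ D` between small categories, any commutative square `Q ⋙ H = G ⋙ M`
admits a unique diagonal `T : B ⥤ C` with `Q ⋙ T = G` and `T ⋙ M = H`. -/
theorem laxEpi_dsb_fillIn {A B C D : Type u}
    [Category.{u} A] [Category.{u} B] [Category.{u} C] [Category.{u} D]
    (Q : A ⥤ B) (M : C ⥤ D) (hQ : Q.IsLaxEpi) (hM : IsDSB M)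
    (G : A ⥤ C) (H : B ⥤ D) (hsq : Q ⋙ H = G ⋙ M) :
    ∃! T : B ⥤ C, Q ⋙ T = G ∧ T ⋙ M = H := by
  let S : DSBAux.Ctx A B C D := ⟨Q, M, G, H, hQ, hM, hsq⟩
  refine ⟨S.TF, ⟨S.comp_left, S.comp_right⟩, ?_⟩
  rintro T' ⟨h1, h2⟩
  exact S.unique T' h1 h2
end

section
/- For any functors F, G : A ⥤ B between categories, the projection functor Π : Ins(F, G) ⥤ A of the inserter category is a lax strong monomorphism: for every lax epimorphism Q : P ⥤ Q' and all functors X : P ⥤ Ins(F, G), Y : Q' ⥤ A with Q ⋙ Y = X ⋙ Π, there exists a unique functor T : Q' ⥤ Ins(F, G) with Q ⋙ T = X and T ⋙ Π = Y. -/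
open CategoryTheory

universe u

namespace CategoryTheory

variable {A B : Type u} [Category.{u} A] [Category.{u} B]

/-- Objects of the inserter category `Ins(F, G)`: pairs `(a, φ)` with `φ : F a ⟶ G a`. -/
structure Inserter (F G : A ⥤ B) where
  pt : A
  φ : F.obj pt ⟶ G.obj pt

/-- The inserter category of two functors `F G : A ⥤ B`. -/
instance Inserter.category (F G : A ⥤ B) : Category (Inserter F G) where
  Hom x y := { u : x.pt ⟶ y.pt // F.map u ≫ y.φ = x.φ ≫ G.map u }
  id x := ⟨𝟙 x.pt, by simp⟩
  comp {x y z} u v := ⟨u.1 ≫ v.1, by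
    rw [F.map_comp, G.map_comp, Category.assoc, v.2, ← Category.assoc, u.2, Category.assoc]⟩
  id_comp f := Subtype.ext (by simp)
  comp_id f := Subtype.ext (by simp)
  assoc f g h := Subtype.ext (by simp)

/-- The projection functor `Π : Ins(F, G) ⥤ A`. -/
def inserterProj (F G : A ⥤ B) : Inserter F G ⥤ A where
  obj x := x.pt
  map u := u.1
  map_id _ := rfl
  map_comp _ _ := rfl

/-- The canonical natural transformation `Π ⋙ F ⟶ Π ⋙ G` on the inserter. -/
def insPhi (F G : A ⥤ B) : inserterProj F G ⋙ F ⟶ inserterProj F G ⋙ G where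
  app x := x.φ
  naturality _ _ u := u.2

lemma Inserter.eqToHom_fst {F G : A ⥤ B} {x y : Inserter F G} (h : x = y) :
    (eqToHom h).1 = eqToHom (congrArg Inserter.pt h) := by subst h; rfl

lemma Inserter.ext' {F G : A ⥤ B} {x y : Inserter F G} (h : x.pt = y.pt)
    (h2 : x.φ = eqToHom (by rw [h]) ≫ y.φ ≫ eqToHom (by rw [h])) : x = y := by
  cases x; cases y
  cases h
  simp only [eqToHom_refl, Category.comp_id, Category.id_comp] at h2
  cases h2
  rfl

lemma Inserter.phi_eq {F G : A ⥤ B} {x y : Inserter F G} (e : x = y) :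
    x.φ = eqToHom (by rw [e]) ≫ y.φ ≫ eqToHom (by rw [e]) := by
  subst e; simp

/-- Build a functor into the inserter from a functor to `A` and a natural transformation. -/
def mkIns {F G : A ⥤ B} {Q' : Type u} [Category.{u} Q'] (Y : Q' ⥤ A)
    (β : Y ⋙ F ⟶ Y ⋙ G) : Q' ⥤ Inserter F G where
  obj q := ⟨Y.obj q, β.app q⟩
  map f := ⟨Y.map f, β.naturality f⟩
  map_id q := Subtype.ext (by simp [Inserter.category]; rfl)
  map_comp f g := Subtype.ext (by simp [Inserter.category]; rfl)

/-- The natural transformation associated to a functor into the inserter. -/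
def betaOf {F G : A ⥤ B} {Q' : Type u} [Category.{u} Q'] {Y : Q' ⥤ A}
    (T : Q' ⥤ Inserter F G) (hY : T ⋙ inserterProj F G = Y) : Y ⋙ F ⟶ Y ⋙ G :=
  eqToHom (by rw [← hY]; rfl) ≫ Functor.whiskerLeft T (insPhi F G) ≫ eqToHom (by rw [← hY]; rfl)

lemma betaOf_app {F G : A ⥤ B} {Q' : Type u} [Category.{u} Q'] {Y : Q' ⥤ A}
    (T : Q' ⥤ Inserter F G) (hY : T ⋙ inserterProj F G = Y) (q : Q') :
    (betaOf T hY).app q =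
      eqToHom (by rw [← hY]; rfl) ≫ (T.obj q).φ ≫ eqToHom (by rw [← hY]; rfl) := by
  simp [betaOf, eqToHom_app, insPhi]
  rfl

lemma eq_mkIns {F G : A ⥤ B} {Q' : Type u} [Category.{u} Q'] {Y : Q' ⥤ A}
    (T : Q' ⥤ Inserter F G) (hY : T ⋙ inserterProj F G = Y) :
    T = mkIns Y (betaOf T hY) := by
  have hobj : ∀ q, T.obj q = (mkIns Y (betaOf T hY)).obj q := by
    intro q
    refine Inserter.ext' (Functor.congr_obj hY q) ?_
    simp only [mkIns]
    rw [betaOf_app]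
    simp
    erw [eqToHom_trans_assoc, eqToHom_trans]
    simp
  refine Functor.ext hobj ?_
  intro q q' f
  apply Subtype.ext
  have := Functor.congr_hom hY f
  simp only [Functor.comp_map] at this
  simp only [Inserter.category, mkIns]
  change (T.map f).1 = (eqToHom (hobj q)).1 ≫ Y.map f ≫ (eqToHom (hobj q').symm).1
  rw [Inserter.eqToHom_fst, Inserter.eqToHom_fst]
  change (T.map f).1 = _ ≫ Y.map f ≫ _
  change (T.map f).1 = _ at this
  rw [this]
  rfl

lemma whiskerLeft_betaOf {F G : A ⥤ B} {P Q' : Type u} [Category.{u} P] [Category.{u} Q']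
    {Q : P ⥤ Q'} {X : P ⥤ Inserter F G} {Y : Q' ⥤ A}
    (T : Q' ⥤ Inserter F G) (hQ : Q ⋙ T = X) (hY : T ⋙ inserterProj F G = Y)
    (h : Q ⋙ Y = X ⋙ inserterProj F G) :
    Functor.whiskerLeft Q (betaOf T hY) =
      eqToHom (by rw [← Functor.assoc, h, Functor.assoc]) ≫ Functor.whiskerLeft X (insPhi F G) ≫
        eqToHom (by rw [← Functor.assoc, ← h, Functor.assoc]) := by
  ext p
  simp only [Functor.whiskerLeft_app, NatTrans.comp_app, eqToHom_app, insPhi]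
  rw [betaOf_app]
  have e : T.obj (Q.obj p) = X.obj p := Functor.congr_obj hQ p
  rw [Inserter.phi_eq e]
  simp
  rfl

/-- The projection of an inserter category is a lax strong monomorphism: it has the unique
diagonal fill-in property with respect to all lax epimorphisms. -/
theorem inserterProj_laxStrongMono (F G : A ⥤ B) :
    ∀ (P Q' : Type u) [Category.{u} P] [Category.{u} Q'] (Q : P ⥤ Q'), Q.IsLaxEpi →
      ∀ (X : P ⥤ Inserter F G) (Y : Q' ⥤ A), Q ⋙ Y = X ⋙ inserterProj F G →
        ∃! T : Q' ⥤ Inserter F G, Q ⋙ T = X ∧ T ⋙ inserterProj F G = Y := by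
  intro P Q' _ _ Q hepi X Y h
  obtain ⟨hfull, hfaithful⟩ := hepi B
  -- the natural transformation to be lifted
  set α : Q ⋙ (Y ⋙ F) ⟶ Q ⋙ (Y ⋙ G) :=
    eqToHom (by rw [← Functor.assoc, h, Functor.assoc]) ≫ Functor.whiskerLeft X (insPhi F G) ≫
      eqToHom (by rw [← Functor.assoc, ← h, Functor.assoc]) with hα
  obtain ⟨β, hβ⟩ := hfull.map_surjective α
  have hβ' : Functor.whiskerLeft Q β = α := hβ
  refine ⟨mkIns Y β, ⟨?_, rfl⟩, ?_⟩
  · -- Q ⋙ mkIns Y β = X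
    have hobj : ∀ p, (Q ⋙ mkIns Y β).obj p = X.obj p := by
      intro p
      refine Inserter.ext' (Functor.congr_obj h p) ?_
      have := congrArg (fun (t : Q ⋙ (Y ⋙ F) ⟶ Q ⋙ (Y ⋙ G)) => t.app p) hβ'
      simp only [Functor.whiskerLeft_app] at this
      simp only [Functor.comp_obj, mkIns]
      rw [this, hα]
      simp [eqToHom_app, insPhi]
      rfl
    refine Functor.ext hobj ?_
    intro p p' f
    apply Subtype.ext
    have := Functor.congr_hom h f
    simp only [Functor.comp_map] at this
    simp only [Inserter.category, mkIns, Functor.comp_map]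
    change Y.map (Q.map f) = (eqToHom (hobj p)).1 ≫ (X.map f).1 ≫ (eqToHom (hobj p').symm).1
    rw [Inserter.eqToHom_fst, Inserter.eqToHom_fst]
    change Y.map (Q.map f) = _ ≫ (X.map f).1 ≫ _
    change Y.map (Q.map f) = _ at this
    rw [this]
    rfl
  · rintro T ⟨hQT, hYT⟩
    have key : Functor.whiskerLeft Q (betaOf T hYT) = Functor.whiskerLeft Q β := by
      rw [whiskerLeft_betaOf T hQT hYT h, hβ', hα]
    have hb : betaOf T hYT = β := hfaithful.map_injective key
    rw [eq_mkIns T hYT, hb]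

end CategoryTheory
end

section
/- Every lax strong monomorphism in Cat is faithful: if M : C ⥤ D is a functor such that for every lax epimorphism Q : A ⥤ B and all functors G : A ⥤ C, H : B ⥤ D with Q ⋙ H = G ⋙ M there exists a unique functor T : B ⥤ C with Q ⋙ T = G and T ⋙ M = H, then M is a faithful functor. -/
open CategoryTheory

universe u

namespace CategoryTheory

/-- The two-object category with hom-set `T` from `a` to `b`. -/
inductive Para (T : Type u) : Type u
  | a | b

/-- Hom sets of `Para T`. -/
def PHom (T : Type u) : Para T → Para T → Type u
  | .a, .a => PUnit
  | .b, .b => PUnit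
  | .a, .b => T
  | .b, .a => PEmpty

def pid (T : Type u) : ∀ x : Para T, PHom T x x
  | .a => PUnit.unit
  | .b => PUnit.unit

def pcomp {T : Type u} : ∀ {x y z : Para T}, PHom T x y → PHom T y z → PHom T x z
  | .a, .a, .a, _, _ => PUnit.unit
  | .a, .a, .b, _, g => g
  | .a, .b, .b, f, _ => f
  | .b, .b, .b, _, _ => PUnit.unit
  | .a, .b, .a, _, g => g.elim
  | .b, .a, _, f, _ => f.elim

instance instParaCat (T : Type u) : Category.{u} (Para T) where
  Hom := PHom T
  id := pid T
  comp := pcomp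
  id_comp := by rintro (_|_) (_|_) f <;> first | exact f.elim | (cases f <;> rfl) | rfl
  comp_id := by rintro (_|_) (_|_) f <;> first | exact f.elim | (cases f <;> rfl) | rfl
  assoc := by
    rintro (_|_) (_|_) (_|_) (_|_) f g h <;>
      first | exact f.elim | exact g.elim | exact h.elim |
        (cases f <;> cases g <;> cases h <;> rfl) | rfl

/-- The functor out of `Para T` determined by a family of arrows. -/
def mkPara {T : Type u} {C : Type u} [Category.{u} C] (X Y : C) (φ : T → (X ⟶ Y)) :
    Para T ⥤ C where
  obj x := match x with | .a => X | .b => Y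
  map {x y} f := match x, y, f with
    | .a, .a, _ => 𝟙 X
    | .b, .b, _ => 𝟙 Y
    | .a, .b, t => φ t
    | .b, .a, e => e.elim
  map_id := by rintro (_|_) <;> rfl
  map_comp := by
    rintro (_|_) (_|_) (_|_) f g <;>
      first | exact f.elim | exact g.elim |
        (show _ = _ ≫ _ ; cases f <;> cases g <;> simp [pcomp, CategoryStruct.comp]) |
        simp [pcomp, CategoryStruct.comp]

/-- The functor `Para T ⥤ Para T'` induced by a map `T → T'`. -/
def paraMap {T T' : Type u} (h : T → T') : Para T ⥤ Para T' where
  obj x := match x with | .a => .a | .b => .b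
  map {x y} f := match x, y, f with
    | .a, .a, _ => PUnit.unit
    | .b, .b, _ => PUnit.unit
    | .a, .b, t => h t
    | .b, .a, e => e.elim
  map_id := by rintro (_|_) <;> rfl
  map_comp := by
    rintro (_|_) (_|_) (_|_) f g <;>
      first | exact f.elim | exact g.elim |
        (cases f <;> cases g <;> rfl) | rfl

theorem paraMap_laxEpi {T : Type u} (t₀ : T) :
    (paraMap (fun _ : T => PUnit.unit.{u+1})).IsLaxEpi := by
  intro E _
  set Q := paraMap (fun _ : T => PUnit.unit.{u+1}) with hQdef
  constructor
  · constructor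
    intro F G γ
    refine ⟨⟨fun x => match x with | .a => γ.app .a | .b => γ.app .b, ?_⟩, ?_⟩
    · rintro (_|_) (_|_) f
      · change PUnit at f; cases f; exact γ.naturality (𝟙 (Para.a : Para T))
      · change PUnit at f; cases f; exact γ.naturality (show (Para.a : Para T) ⟶ Para.b from t₀)
      · exact f.elim
      · change PUnit at f; cases f; exact γ.naturality (𝟙 (Para.b : Para T))
    · apply NatTrans.ext; funext x
      cases x <;> rfl
  · constructor
    intro F G α β h
    apply NatTrans.ext; funext x
    cases x with
    | a => exact congr_fun (congrArg NatTrans.app h) Para.a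
    | b => exact congr_fun (congrArg NatTrans.app h) Para.b

/-- Every lax strong monomorphism in `Cat` is faithful: if `M : C ⥤ D` has the unique
diagonal fill-in property with respect to all lax epimorphisms, then `M` is faithful. -/
theorem laxStrongMono_faithful {C D : Type u} [Category.{u} C] [Category.{u} D] (M : C ⥤ D)
    (hM : ∀ (A B : Type u) [Category.{u} A] [Category.{u} B] (Q : A ⥤ B), Q.IsLaxEpi →
      ∀ (G : A ⥤ C) (H : B ⥤ D), Q ⋙ H = G ⋙ M →
        ∃! T : B ⥤ C, Q ⋙ T = G ∧ T ⋙ M = H) :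
    M.Faithful := by
  refine ⟨fun {X Y} {f g} hfg => ?_⟩
  let Q : Para (ULift.{u} Bool) ⥤ Para PUnit := paraMap (fun _ => PUnit.unit)
  let G : Para (ULift.{u} Bool) ⥤ C := mkPara X Y (fun t => if t.down then f else g)
  let H : Para PUnit ⥤ D := mkPara (M.obj X) (M.obj Y) (fun _ => M.map f)
  have hQH : Q ⋙ H = G ⋙ M := by
    refine Functor.ext ?_ ?_
    · rintro (_|_) <;> rfl
    · rintro (_|_) (_|_) φ
      · simp [Q, H, G, paraMap, mkPara]; rfl
      · simp only [Q, H, G, Functor.comp_map, paraMap, mkPara, eqToHom_refl,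
          Category.id_comp, Category.comp_id]
        by_cases hb : φ.down <;> simp [hb, hfg] <;> exact (Category.id_comp _).symm
      · exact φ.elim
      · simp [Q, H, G, paraMap, mkPara]; rfl
  obtain ⟨T, ⟨hT1, _⟩, _⟩ := hM _ _ Q (paraMap_laxEpi ⟨true⟩) G H hQH
  have hf := Functor.congr_hom hT1 (show (Para.a : Para (ULift Bool)) ⟶ Para.b from ⟨true⟩)
  have hg := Functor.congr_hom hT1 (show (Para.a : Para (ULift Bool)) ⟶ Para.b from ⟨false⟩)
  have h1 : G.map (show (Para.a : Para (ULift Bool)) ⟶ Para.b from ⟨true⟩) = f := by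
    simp [G, mkPara]
  have h2 : G.map (show (Para.a : Para (ULift Bool)) ⟶ Para.b from ⟨false⟩) = g := by
    simp [G, mkPara]
  rw [h1] at hf
  rw [h2] at hg
  have hQ : (Q ⋙ T).map (show (Para.a : Para (ULift Bool)) ⟶ Para.b from ⟨true⟩)
      = (Q ⋙ T).map (show (Para.a : Para (ULift Bool)) ⟶ Para.b from ⟨false⟩) := rfl
  rw [hf, hg] at hQ
  simp only [eqToHom_comp_iff, comp_eqToHom_iff, Category.assoc, eqToHom_trans,
    eqToHom_trans_assoc, eqToHom_refl, Category.id_comp, Category.comp_id] at hQ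
  have key : ∀ {A B B' : C} (p : B = B') (u v : A ⟶ B),
      u ≫ eqToHom p = v ≫ eqToHom p → u = v := by
    intro A B B' p u v h
    subst p
    simpa using h
  exact key _ f g hQ

end CategoryTheory
end

section
/- A functor F : A ⥤ B between small categories is a lax epimorphism if and only if for every morphism g : b ⟶ c of B, the factorization category g↓↓F is connected (nonempty, and any two objects are joined by a finite zigzag of morphisms). -/
open CategoryTheory

universe u

namespace LaxEpiAux

open CategoryTheory

variable {A B : Type u} [Category.{u} A] [Category.{u} B]

variable (F : A ⥤ B) (b : B)

/-- A wedge from `b` to `x` through `F`. -/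
structure Wedge (x : B) where
  pt : A
  h : b ⟶ F.obj pt
  k : F.obj pt ⟶ x

/-- Elementary relation on wedges. -/
def WRel {x : B} (w w' : Wedge F b x) : Prop :=
  ∃ u : w.pt ⟶ w'.pt, w.h ≫ F.map u = w'.h ∧ F.map u ≫ w'.k = w.k

/-- Connected components of wedges. -/
def Hq (x : B) : Type u := Quot (WRel F b (x := x))

/-- The composite of a wedge. -/
def wcomp {x : B} (w : Wedge F b x) : b ⟶ x := w.h ≫ w.k

lemma wcomp_eq_of_eqvGen {x : B} {w w' : Wedge F b x}
    (h : Relation.EqvGen (WRel F b) w w') : wcomp F b w = wcomp F b w' := by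
  induction h with
  | rel w w' r =>
    obtain ⟨u, hu1, hu2⟩ := r
    simp only [wcomp, ← hu1, ← hu2, Category.assoc]
  | refl _ => rfl
  | symm _ _ _ ih => exact ih.symm
  | trans _ _ _ _ _ ih1 ih2 => exact ih1.trans ih2

lemma zigzag_of_eqvGen_s17 {c : B} (g : b ⟶ c) {w w' : Wedge F b c}
    (h : Relation.EqvGen (WRel F b) w w') :
    ∀ (h1 : wcomp F b w = g) (h2 : wcomp F b w' = g),
      Zigzag (J := FactObj F g) ⟨w.pt, w.h, w.k, h1⟩ ⟨w'.pt, w'.h, w'.k, h2⟩ := by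
  induction h with
  | rel w w' r =>
    intro h1 h2
    obtain ⟨u, hu1, hu2⟩ := r
    exact Zigzag.of_hom (⟨u, hu1, hu2⟩ :
      (⟨w.pt, w.h, w.k, h1⟩ : FactObj F g) ⟶ ⟨w'.pt, w'.h, w'.k, h2⟩)
  | refl w => intro h1 h2; exact Zigzag.refl _
  | symm w w' hr ih => intro h1 h2; exact (ih h2 h1).symm
  | trans w w2 w' h12 h23 ih1 ih2 =>
    intro h1 h3
    have h2 : wcomp F b w2 = g := (wcomp_eq_of_eqvGen F b h12).symm.trans h1
    exact (ih1 h1 h2).trans (ih2 h2 h3)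

/-- The auxiliary small category used to test lax epimorphy. -/
inductive CC_s17 (F : A ⥤ B) (b : B) : Type u
  | left : B → CC_s17 F b
  | right : B → CC_s17 F b

variable {F b} in
/-- The family of sets indexed by `CC`. -/
def S : CC_s17 F b → Type u
  | .left x => (b ⟶ x)
  | .right x => Hq F b x

instance : Category.{u} (CC_s17 F b) where
  Hom i j := S i → S j
  id _ := _root_.id
  comp f g := g ∘ f

/-- The "hom" functor. -/
def Gf : B ⥤ CC_s17 F b where
  obj x := .left x
  map {x y} f := fun (h : b ⟶ x) => (h ≫ f : b ⟶ y)
  map_id x := funext fun h => Category.comp_id h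
  map_comp f g := funext fun h => (Category.assoc h f g).symm

/-- Pushing a wedge forward. -/
def wmap {x y : B} (f : x ⟶ y) (w : Wedge F b x) : Wedge F b y := ⟨w.pt, w.h, w.k ≫ f⟩

/-- The components functor. -/
def Hf : B ⥤ CC_s17 F b where
  obj x := .right x
  map {x y} f := (Quot.map (wmap F b f) (by
      rintro ⟨a, h, k⟩ ⟨a', h', k'⟩ ⟨u, hu1, hu2⟩
      exact ⟨u, hu1, by simp only [wmap]; rw [← Category.assoc, hu2]⟩) : Hq F b x → Hq F b y)
  map_id x := funext <| by
    apply Quot.ind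
    intro w
    show Quot.mk _ (wmap F b (𝟙 x) w) = Quot.mk _ w
    cases w; simp [wmap]
  map_comp {x y z} f g := funext <| by
    apply Quot.ind
    intro w
    show Quot.mk _ (wmap F b (f ≫ g) w) = Quot.mk _ (wmap F b g (wmap F b f w))
    cases w; simp [wmap]

/-- The comparison natural transformation. -/
def phi : Hf F b ⟶ Gf F b where
  app x := (Quot.lift (wcomp F b) (fun w w' r =>
      wcomp_eq_of_eqvGen F b (Relation.EqvGen.rel _ _ r)) : Hq F b x → (b ⟶ x))
  naturality {x y} f := funext <| by
    apply Quot.ind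
    intro w
    show wcomp F b (wmap F b f w) = wcomp F b w ≫ f
    simp [wcomp, wmap]

/-- The natural transformation `σ : F ⋙ Gf ⟶ F ⋙ Hf`. -/
def sigma : F ⋙ Gf F b ⟶ F ⋙ Hf F b where
  app a := fun (h : b ⟶ F.obj a) => (Quot.mk _ ⟨a, h, 𝟙 (F.obj a)⟩ : Hq F b (F.obj a))
  naturality {a a'} u := funext fun (h : b ⟶ F.obj a) => by
    show (Quot.mk _ ⟨a', h ≫ F.map u, 𝟙 _⟩ : Hq F b (F.obj a'))
        = Quot.mk _ (wmap F b (F.map u) ⟨a, h, 𝟙 _⟩)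
    exact (Quot.sound ⟨u, rfl, by simp [wmap]⟩).symm

end LaxEpiAux

section MainProof
open CategoryTheory LaxEpiAux

variable {A B : Type u} [Category.{u} A] [Category.{u} B]

/-- The value of a factorization object under a natural transformation on the image. -/
def fval {F : A ⥤ B} {C : Type u} [Category.{u} C] {G H : B ⥤ C} (γ : F ⋙ G ⟶ F ⋙ H)
    {b c : B} {g : b ⟶ c} (x : FactObj F g) : G.obj b ⟶ H.obj c :=
  G.map x.h ≫ γ.app x.pt ≫ H.map x.k

lemma fval_const {F : A ⥤ B} {C : Type u} [Category.{u} C] {G H : B ⥤ C} (γ : F ⋙ G ⟶ F ⋙ H)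
    {b c : B} (g : b ⟶ c) [IsConnected (FactObj F g)]
    (x y : FactObj F g) : fval γ x = fval γ y := by
  apply constant_of_preserves_morphisms
  intro j₁ j₂ u
  have hnat : γ.app j₁.pt ≫ H.map (F.map u.1) = G.map (F.map u.1) ≫ γ.app j₂.pt :=
    (γ.naturality u.1).symm
  calc G.map j₁.h ≫ γ.app j₁.pt ≫ H.map j₁.k
      = G.map j₁.h ≫ γ.app j₁.pt ≫ H.map (F.map u.1) ≫ H.map j₂.k := by
        rw [← H.map_comp, u.2.2]
    _ = G.map j₁.h ≫ (γ.app j₁.pt ≫ H.map (F.map u.1)) ≫ H.map j₂.k := by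
        rw [Category.assoc]
    _ = (G.map j₁.h ≫ G.map (F.map u.1)) ≫ γ.app j₂.pt ≫ H.map j₂.k := by
        rw [hnat]; simp only [Category.assoc]
    _ = G.map j₂.h ≫ γ.app j₂.pt ≫ H.map j₂.k := by rw [← G.map_comp, u.2.1]

end MainProof

open LaxEpiAux

open CategoryTheory in

/-- A functor `F : A ⥤ B` between small categories is a lax epimorphism if and only if, for
every morphism `g` of `B`, the factorization category `g ↓↓ F` is connected. -/
theorem isLaxEpi_iff_factObj_connected {A B : Type u} [Category.{u} A] [Category.{u} B]
    (F : A ⥤ B) :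
    F.IsLaxEpi ↔ ∀ {b c : B} (g : b ⟶ c), IsConnected (FactObj F g) := by
  constructor
  · -- lax epi implies connected factorization categories
    intro hlax b c g
    obtain ⟨hfull, hfaith⟩ := hlax (CC_s17 F b)
    obtain ⟨α, hα⟩ := hfull.map_surjective (sigma F b)
    have happ : ∀ a : A, α.app (F.obj a) = (sigma F b).app a := fun a =>
      congrArg (fun τ : F ⋙ Gf F b ⟶ F ⋙ Hf F b => τ.app a) hα
    have hαφ : α ≫ phi F b = 𝟙 (Gf F b) := by
      apply hfaith.map_injective
      rw [Functor.map_comp, CategoryTheory.Functor.map_id]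
      apply NatTrans.ext
      funext a
      apply funext
      intro (h : b ⟶ F.obj a)
      show (phi F b).app (F.obj a) (α.app (F.obj a) h) = h
      rw [happ a]
      show wcomp F b ⟨a, h, 𝟙 _⟩ = h
      simp [wcomp]
    have hφα : phi F b ≫ α = 𝟙 (Hf F b) := by
      apply hfaith.map_injective
      rw [Functor.map_comp, CategoryTheory.Functor.map_id]
      apply NatTrans.ext
      funext a
      apply funext
      apply Quot.ind
      intro w
      show α.app (F.obj a) ((phi F b).app (F.obj a) (Quot.mk _ w)) = Quot.mk _ w
      have hnat : α.app (F.obj a) (w.h ≫ w.k) = (Hf F b).map w.k (α.app (F.obj w.pt) w.h) :=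
        congrFun (α.naturality w.k) w.h
      show α.app (F.obj a) (wcomp F b w) = Quot.mk _ w
      rw [wcomp, hnat, happ w.pt]
      show Quot.mk _ (wmap F b w.k ⟨w.pt, w.h, 𝟙 _⟩) = Quot.mk _ w
      cases w
      simp [wmap]
    have hsec : ∀ q : Hq F b c, α.app c ((phi F b).app c q) = q := fun q =>
      congrFun (congrArg (fun τ : Hf F b ⟶ Hf F b => τ.app c) hφα) q
    have hret : (phi F b).app c (α.app c g) = g :=
      congrFun (congrArg (fun τ : Gf F b ⟶ Gf F b => τ.app c) hαφ) g
    obtain ⟨w0, hw0⟩ := Quot.exists_rep (α.app c g)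
    have hcomp : wcomp F b w0 = g := by
      rw [← hw0] at hret
      exact hret
    haveI : Nonempty (FactObj F g) := ⟨⟨w0.pt, w0.h, w0.k, hcomp⟩⟩
    apply zigzag_isConnected
    intro x y
    have hx : (Quot.mk _ ⟨x.pt, x.h, x.k⟩ : Hq F b c) = α.app c g := by
      have := hsec (Quot.mk _ ⟨x.pt, x.h, x.k⟩)
      rw [show (phi F b).app c (Quot.mk _ ⟨x.pt, x.h, x.k⟩) = g from x.fac] at this
      exact this.symm
    have hy : (Quot.mk _ ⟨y.pt, y.h, y.k⟩ : Hq F b c) = α.app c g := by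
      have := hsec (Quot.mk _ ⟨y.pt, y.h, y.k⟩)
      rw [show (phi F b).app c (Quot.mk _ ⟨y.pt, y.h, y.k⟩) = g from y.fac] at this
      exact this.symm
    have hq : (Quot.mk (WRel F b) ⟨x.pt, x.h, x.k⟩ : Hq F b c) = Quot.mk _ ⟨y.pt, y.h, y.k⟩ :=
      hx.trans hy.symm
    have heq := Quot.eq.mp hq
    have hz := zigzag_of_eqvGen_s17 F b g heq x.fac y.fac
    exact hz
  · -- connected factorization categories imply lax epi
    intro hconn C _
    have w : ∀ x : B, FactObj F (𝟙 x) := fun x => (hconn (𝟙 x)).is_nonempty.some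
    constructor
    · refine ⟨fun {G H} γ => ?_⟩
      refine ⟨⟨fun x => fval γ (w x), ?_⟩, ?_⟩
      · intro x y f
        haveI := hconn f
        have hc := fval_const γ f
          ⟨(w x).pt, (w x).h, (w x).k ≫ f, by
            rw [← Category.assoc, (w x).fac, Category.id_comp]⟩
          ⟨(w y).pt, f ≫ (w y).h, (w y).k, by
            rw [Category.assoc, (w y).fac, Category.comp_id]⟩
        simp only [fval, Functor.map_comp, Category.assoc] at hc ⊢
        exact hc.symm
      · apply NatTrans.ext
        funext a
        show fval γ (w (F.obj a)) = γ.app a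
        haveI := hconn (𝟙 (F.obj a))
        rw [fval_const γ (𝟙 (F.obj a)) (w (F.obj a)) ⟨a, 𝟙 _, 𝟙 _, Category.id_comp _⟩]
        simp [fval]
    · refine ⟨fun {G H} α β hw => ?_⟩
      apply NatTrans.ext
      funext x
      have key : ∀ τ : G ⟶ H, τ.app x = G.map (w x).h ≫ τ.app (F.obj (w x).pt) ≫ H.map (w x).k := by
        intro τ
        conv_rhs => rw [← Category.assoc, τ.naturality (w x).h, Category.assoc,
          ← H.map_comp, (w x).fac, H.map_id, Category.comp_id]
      have hab : α.app (F.obj (w x).pt) = β.app (F.obj (w x).pt) :=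
        congrArg (fun τ : F ⋙ G ⟶ F ⋙ H => τ.app (w x).pt) hw
      rw [key α, key β, hab]
end
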